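/- Let G be a layered DAG possessing the Limited Hiding-Cardinality property, and let P = (P_0 = (∅,∅), P_1, ..., P_τ) be any black-white pebbling on G starting from the empty configuration. Then for every t ∈ {1,...,τ}, pot(P_t) ≤ 2 · max_{s ≤ t} cost(P_s), where cost(B,W) = |B ∪ W|. -/

import Mathlib

/-- A layered DAG: vertices are partitioned into levels `0, 1, ..., height`,
every edge goes from some level `L - 1` to level `L` (`pred v` is the finite
set of immediate predecessors of `v`), all sources are on level `0`, and there
is a unique sink, located on the top level. -/
structure LGraph (V : Type) where
  pred : V → Finset V
  height : ℕ
  lvl : V → ℕ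
  lvl_le : ∀ v, lvl v ≤ height
  edge_lvl : ∀ u v, u ∈ pred v → lvl v = lvl u + 1
  source_lvl : ∀ v, pred v = ∅ ↔ lvl v = 0
  sink : V
  sink_unique : ∀ v, (∀ w, v ∉ pred w) ↔ v = sink
  sink_lvl : lvl sink = height
/-- `l` is a path from a source to `w` (in a graph given by its immediate
predecessor function `pred`): consecutive vertices are joined by edges, the
first vertex is a source, and the last vertex is `w`. -/
def IsSourcePath {V : Type} (pred : V → Finset V) (l : List V) (w : V) : Prop :=
  l.Chain' (fun a b => a ∈ pred b) ∧ (∃ s, l.head? = some s ∧ pred s = ∅) ∧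
    l.getLast? = some w

/-- A vertex set `U` hides the vertex `w` if every path from a source to `w`
intersects `U`. -/
def Hides {V : Type} (pred : V → Finset V) (U : Set V) (w : V) : Prop :=
  ∀ l : List V, IsSourcePath pred l w → ∃ u ∈ U, u ∈ l

/-- `U` hides the vertex set `B` if it hides every vertex of `B`. -/
def HidesSet {V : Type} (pred : V → Finset V) (U B : Set V) : Prop :=
  ∀ w ∈ B, Hides pred U w

/-- `Reaches pred u v` : the vertex `v` is reachable from `u`. -/
def Reaches {V : Type} (pred : V → Finset V) : V → V → Prop :=
  Relation.ReflTransGen fun a b => a ∈ pred b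
/-- The `j`-th partial measure of a vertex set `U` in a layered DAG:
`j + 2·|U^{≥j}|` if the part `U^{≥j}` of `U` on level `j` or higher is
nonempty, and `0` otherwise. -/
def mjMeasure {V : Type} (G : LGraph V) (U : Finset V) (j : ℕ) : ℕ :=
  if (U.filter fun u => j ≤ G.lvl u).Nonempty then
    j + 2 * (U.filter fun u => j ≤ G.lvl u).card
  else 0

/-- The measure of a vertex set `U`: the maximum of its partial measures. -/
def klMeasure {V : Type} (G : LGraph V) (U : Finset V) : ℕ :=
  (Finset.range (G.height + 1)).sup (mjMeasure G U)

/-- The potential of a black-white pebble configuration `(B, W)`: the minimum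
measure of a vertex set `U` such that `U ∪ W` hides `B`. -/
noncomputable def pot {V : Type} [DecidableEq V] (G : LGraph V) (B W : Finset V) : ℕ :=
  sInf { m | ∃ U : Finset V, HidesSet G.pred (↑(U ∪ W)) (↑B) ∧ klMeasure G U = m }
/-- A move in the black-white pebble game. -/
inductive BWMove {V : Type} [DecidableEq V] (pred : V → Finset V) :
    Finset V × Finset V → Finset V × Finset V → Prop
  | placeBlack {B W : Finset V} {v : V} (hv : v ∉ B ∪ W) (hp : ∀ u ∈ pred v, u ∈ B ∪ W) :
      BWMove pred (B, W) (insert v B, W)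
  | removeBlack {B W : Finset V} {v : V} (hv : v ∈ B) :
      BWMove pred (B, W) (B.erase v, W)
  | placeWhite {B W : Finset V} {v : V} (hv : v ∉ B ∪ W) :
      BWMove pred (B, W) (B, insert v W)
  | removeWhite {B W : Finset V} {v : V} (hv : v ∈ W) (hp : ∀ u ∈ pred v, u ∈ B ∪ W) :
      BWMove pred (B, W) (B, W.erase v)

/-- A complete black-white pebbling: starts at `(∅, ∅)` and ends at `({z}, ∅)`. -/
structure BWPebbling {V : Type} [DecidableEq V] (pred : V → Finset V) (z : V) where
  len : ℕ
  cfg : ℕ → Finset V × Finset V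
  init : cfg 0 = (∅, ∅)
  final : cfg len = ({z}, ∅)
  steps : ∀ t < len, BWMove pred (cfg t) (cfg (t + 1))

/-- The cost of a black-white pebbling: the maximum of `|B ∪ W|` over its
configurations. -/
def BWPebbling.cost {V : Type} [DecidableEq V] {pred : V → Finset V} {z : V}
    (P : BWPebbling pred z) : ℕ :=
  (Finset.range (P.len + 1)).sup fun t => ((P.cfg t).1 ∪ (P.cfg t).2).card

/-- The black-white pebbling price: the minimum cost of a complete black-white
pebbling. -/
noncomputable def bwPebPrice {V : Type} [DecidableEq V] (pred : V → Finset V) (z : V) : ℕ :=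
  sInf { c | ∃ P : BWPebbling pred z, P.cost = c }

/-- A black-white pebbling on a graph starting from the empty configuration
(with no requirement on the final configuration). -/
structure BWPlay {V : Type} [DecidableEq V] (pred : V → Finset V) where
  len : ℕ
  cfg : ℕ → Finset V × Finset V
  init : cfg 0 = (∅, ∅)
  steps : ∀ t < len, BWMove pred (cfg t) (cfg (t + 1))
section Aux

variable {V : Type}

lemma hides_mono {pred : V → Finset V} {S T : Set V} (h : S ⊆ T) {w : V}
    (hw : Hides pred S w) : Hides pred T w := fun l hl => by
  obtain ⟨u, hu, hul⟩ := hw l hl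
  exact ⟨u, h hu, hul⟩

lemma hides_of_mem {pred : V → Finset V} {S : Set V} {w : V} (hw : w ∈ S) :
    Hides pred S w := fun _ hl => ⟨w, hw, List.mem_of_mem_getLast? hl.2.2⟩

lemma sourcePath_decomp {pred : V → Finset V} {l : List V} {v : V}
    (h : IsSourcePath pred l v) (hv : pred v ≠ ∅) :
    ∃ l₁ u, l = l₁ ++ [v] ∧ u ∈ pred v ∧ IsSourcePath pred l₁ u := by
  obtain ⟨hc, ⟨s, hs, hsrc⟩, hlast⟩ := h
  have hl : l.dropLast ++ [v] = l := List.dropLast_append_getLast? v hlast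
  rcases eq_or_ne l.dropLast [] with h0 | h0
  · rw [h0] at hl
    rw [← hl] at hs
    simp at hs
    subst hs
    exact absurd hsrc hv
  · have hlast1 : l.dropLast.getLast? = some (l.dropLast.getLast h0) :=
      List.getLast?_eq_getLast h0
    refine ⟨l.dropLast, l.dropLast.getLast h0, hl.symm, ?_, ?_, ⟨s, ?_, hsrc⟩, hlast1⟩
    · rw [← hl] at hc
      have := (List.isChain_append.1 hc).2.2
      exact this _ hlast1 v rfl
    · rw [← hl] at hc
      exact (List.isChain_append.1 hc).1
    · rw [← hl, List.head?_append] at hs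
      have : l.dropLast.head? = some (l.dropLast.head h0) := List.head?_eq_head h0
      rw [this] at hs ⊢
      simpa using hs

lemma sourcePath_prefix {pred : V → Finset V} {l : List V} {w v : V}
    (h : IsSourcePath pred l w) (hvl : v ∈ l) (hv : pred v ≠ ∅) :
    ∃ l' : List V, IsSourcePath pred l' v ∧ l'.length ≤ l.length ∧ ∀ x ∈ l', x ∈ l := by
  obtain ⟨l₁, l₂, rfl⟩ := List.append_of_mem hvl
  obtain ⟨hc, ⟨s, hs, hsrc⟩, _⟩ := h
  refine ⟨l₁ ++ [v], ⟨?_, ⟨s, ?_, hsrc⟩, List.getLast?_concat⟩, ?_, ?_⟩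
  · exact hc.prefix ⟨l₂, by simp⟩
  · rw [List.head?_append] at hs ⊢
    simpa using hs
  · simp
  · intro x hx
    rcases List.mem_append.1 hx with hx | hx
    · exact List.mem_append_left _ hx
    · simp at hx
      subst hx
      exact List.mem_append_right _ (by simp)

lemma hides_newblack {pred : V → Finset V} {S B : Set V} {v : V}
    (hH : HidesSet pred S B) (hpred : ∀ u ∈ pred v, u ∈ B ∨ u ∈ S) (hvs : pred v ≠ ∅) :
    Hides pred S v := by
  intro l hp
  obtain ⟨l₁, u, rfl, hu, hp₁⟩ := sourcePath_decomp hp hvs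
  rcases hpred u hu with hB | hS
  · obtain ⟨x, hxS, hxl⟩ := hH u hB l₁ hp₁
    exact ⟨x, hxS, List.mem_append_left _ hxl⟩
  · exact ⟨u, hS, List.mem_append_left _ (List.mem_of_mem_getLast? hp₁.2.2)⟩

lemma hides_descend {pred : V → Finset V} {S T B : Set V} {v : V}
    (hST : ∀ x ∈ S, x = v ∨ x ∈ T)
    (hH : HidesSet pred S B)
    (hpred : ∀ u ∈ pred v, u ∈ B ∨ u ∈ T)
    (hvs : pred v ≠ ∅) :
    HidesSet pred T B := by
  have key : ∀ n (l : List V), l.length ≤ n → IsSourcePath pred l v → ∃ x ∈ T, x ∈ l := by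
    intro n
    induction n with
    | zero =>
      intro l hl hp
      have : l = [] := List.length_eq_zero_iff.1 (Nat.le_zero.1 hl)
      subst this
      simp [IsSourcePath] at hp
    | succ n ih =>
      intro l hl hp
      obtain ⟨l₁, u, rfl, hu, hp₁⟩ := sourcePath_decomp hp hvs
      have hlen₁ : l₁.length ≤ n := by simp at hl; omega
      rcases hpred u hu with hB | hT
      · obtain ⟨x, hxS, hxl⟩ := hH u hB l₁ hp₁
        rcases hST x hxS with rfl | hxT
        · obtain ⟨l', hp', hlen', hsub⟩ := sourcePath_prefix hp₁ hxl hvs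
          obtain ⟨y, hyT, hyl⟩ := ih l' (le_trans hlen' hlen₁) hp'
          exact ⟨y, hyT, List.mem_append_left _ (hsub y hyl)⟩
        · exact ⟨x, hxT, List.mem_append_left _ hxl⟩
      · exact ⟨u, hT, List.mem_append_left _ (List.mem_of_mem_getLast? hp₁.2.2)⟩
  intro b hb l hp
  obtain ⟨x, hxS, hxl⟩ := hH b hb l hp
  rcases hST x hxS with rfl | hxT
  · obtain ⟨l', hp', hlen', hsub⟩ := sourcePath_prefix hp hxl hvs
    obtain ⟨y, hyT, hyl⟩ := key l.length l' hlen' hp'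
    exact ⟨y, hyT, hsub y hyl⟩
  · exact ⟨x, hxT, hxl⟩

end Aux
section Aux2

variable {V : Type}

lemma mjMeasure_le_klMeasure (G : LGraph V) (U : Finset V) {j : ℕ} (hj : j ≤ G.height) :
    mjMeasure G U j ≤ klMeasure G U :=
  Finset.le_sup (Finset.mem_range.2 (Nat.lt_succ_of_le hj))

lemma mjMeasure_zero_le [DecidableEq V] (G : LGraph V) (U : Finset V) :
    mjMeasure G U 0 ≤ 2 * U.card := by
  unfold mjMeasure
  split
  · simp only [Nat.zero_add]
    exact Nat.mul_le_mul_left 2 (Finset.card_filter_le U _)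
  · exact Nat.zero_le _

lemma mjMeasure_insert_pos [DecidableEq V] (G : LGraph V) (U : Finset V) {v : V}
    (hv : G.lvl v = 0) {j : ℕ} (hj : 1 ≤ j) :
    mjMeasure G (insert v U) j = mjMeasure G U j := by
  have hf : (insert v U).filter (fun u => j ≤ G.lvl u) = U.filter (fun u => j ≤ G.lvl u) := by
    rw [Finset.filter_insert, if_neg (by rw [hv]; omega)]
  unfold mjMeasure
  rw [hf]

lemma klMeasure_empty [DecidableEq V] (G : LGraph V) : klMeasure G (∅ : Finset V) = 0 := by
  simp [klMeasure, mjMeasure]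

lemma pot_le_of_hides [DecidableEq V] (G : LGraph V) (B W U : Finset V)
    (h : HidesSet G.pred (↑(U ∪ W)) (↑B)) : pot G B W ≤ klMeasure G U :=
  Nat.sInf_le ⟨U, h, rfl⟩

lemma klMeasure_insert_source [DecidableEq V] (G : LGraph V) {U : Finset V} {v : V}
    (hv : G.lvl v = 0) {N : ℕ} (h0 : 2 * (U.card + 1) ≤ N) (hU : klMeasure G U ≤ N) :
    klMeasure G (insert v U) ≤ N := by
  apply Finset.sup_le
  intro j hj
  rcases Nat.eq_zero_or_pos j with rfl | hpos
  · refine le_trans (mjMeasure_zero_le G _) ?_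
    have := Finset.card_insert_le v U
    omega
  · rw [mjMeasure_insert_pos G U hv hpos]
    exact le_trans (mjMeasure_le_klMeasure G U (Nat.lt_succ_iff.1 (Finset.mem_range.1 hj))) hU

lemma bwmove_disjoint [DecidableEq V] {pred : V → Finset V} {B W B' W' : Finset V}
    (hm : BWMove pred (B, W) (B', W')) (hd : Disjoint B W) : Disjoint B' W' := by
  cases hm with
  | placeBlack hv hp =>
    rw [Finset.disjoint_insert_left]
    exact ⟨fun h => hv (Finset.mem_union_right _ h), hd⟩
  | removeBlack hv => exact Finset.disjoint_of_subset_left (Finset.erase_subset _ _) hd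
  | placeWhite hv =>
    rw [Finset.disjoint_insert_right]
    exact ⟨fun h => hv (Finset.mem_union_left _ h), hd⟩
  | removeWhite hv hp => exact Finset.disjoint_of_subset_right (Finset.erase_subset _ _) hd

end Aux2
lemma step_bound {V : Type} [DecidableEq V] (G : LGraph V)
    (hLHC : ∀ B W : Finset V, Disjoint B W →
      ∃ U : Finset V, HidesSet G.pred (↑(U ∪ W)) (↑B) ∧
        pot G B W = klMeasure G U ∧ (U = B ∨ U.card < B.card + W.card))
    {B W B' W' : Finset V} (hd : Disjoint B W)
    (hm : BWMove G.pred (B, W) (B', W')) {c : ℕ}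
    (hpot : pot G B W ≤ 2 * c) (hc1 : (B ∪ W).card ≤ c) (hc2 : (B' ∪ W').card ≤ c) :
    pot G B' W' ≤ 2 * c := by
  obtain ⟨U, hU, hpU, hcard⟩ := hLHC B W hd
  have hUcard : U.card ≤ B.card + W.card := by
    rcases hcard with rfl | h
    · exact Nat.le_add_right _ _
    · exact le_of_lt h
  have hBW : (B ∪ W).card = B.card + W.card := Finset.card_union_of_disjoint hd
  have hmU : klMeasure G U ≤ 2 * c := hpU ▸ hpot
  cases hm with
  | @placeBlack _ _ v hv hp =>
    by_cases hsrc : G.pred v = ∅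
    · -- place black on a source: use insert v U
      have hlv : G.lvl v = 0 := (G.source_lvl v).1 hsrc
      have hhide : HidesSet G.pred (↑(insert v U ∪ W)) (↑(insert v B)) := by
        intro w hw
        rcases Finset.mem_insert.1 hw with rfl | hw
        · exact hides_of_mem (by simp)
        · refine hides_mono ?_ (hU w hw)
          intro x hx
          simp only [Finset.coe_union, Finset.coe_insert, Set.mem_union, Set.mem_insert_iff] at hx ⊢
          tauto
      refine le_trans (pot_le_of_hides G _ _ _ hhide) ?_
      refine klMeasure_insert_source G hlv ?_ hmU
      have h3 : (insert v B ∪ W).card = B.card + W.card + 1 := by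
        rw [Finset.insert_union, Finset.card_insert_of_notMem (by simpa using hv), hBW]
      omega
    · -- place black on a non-source: U still works
      have hhide : HidesSet G.pred (↑(U ∪ W)) (↑(insert v B)) := by
        intro w hw
        rcases Finset.mem_insert.1 hw with rfl | hw
        · refine hides_newblack hU ?_ hsrc
          intro u hu
          rcases Finset.mem_union.1 (hp u hu) with h | h
          · exact Or.inl (by simpa using h)
          · exact Or.inr (by simp [h])
        · exact hU w hw
      exact le_trans (pot_le_of_hides G _ _ _ hhide) hmU
  | @removeBlack _ _ v hv =>
    have hhide : HidesSet G.pred (↑(U ∪ W)) (↑(B.erase v)) := fun w hw =>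
      hU w (Finset.mem_coe.2 (Finset.mem_of_mem_erase (Finset.mem_coe.1 hw)))
    exact le_trans (pot_le_of_hides G _ _ _ hhide) hmU
  | @placeWhite _ _ v hv =>
    have hhide : HidesSet G.pred (↑(U ∪ insert v W)) (↑B) := by
      intro w hw
      refine hides_mono ?_ (hU w hw)
      intro x hx
      simp only [Finset.coe_union, Finset.coe_insert, Set.mem_union, Set.mem_insert_iff] at hx ⊢
      tauto
    exact le_trans (pot_le_of_hides G _ _ _ hhide) hmU
  | @removeWhite _ _ v hv hp =>
    by_cases hsrc : G.pred v = ∅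
    · -- remove white from a source: use insert v U
      have hlv : G.lvl v = 0 := (G.source_lvl v).1 hsrc
      have hhide : HidesSet G.pred (↑(insert v U ∪ W.erase v)) (↑B) := by
        intro w hw
        refine hides_mono ?_ (hU w hw)
        intro x hx
        simp only [Finset.coe_union, Finset.coe_insert, Finset.coe_erase, Set.mem_union,
          Set.mem_insert_iff, Set.mem_diff, Set.mem_singleton_iff, Finset.mem_coe] at hx ⊢
        rcases hx with hx | hx
        · tauto
        · by_cases hxv : x = v
          · tauto
          · tauto
      refine le_trans (pot_le_of_hides G _ _ _ hhide) ?_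
      refine klMeasure_insert_source G hlv ?_ hmU
      have hW : 1 ≤ W.card := Finset.card_pos.2 ⟨v, hv⟩
      have : U.card + 1 ≤ B.card + W.card := by
        rcases hcard with rfl | h
        · omega
        · omega
      omega
    · -- remove white from a non-source: U still works, by the descent argument
      have hhide : HidesSet G.pred (↑(U ∪ W.erase v)) (↑B) := by
        refine hides_descend (S := ↑(U ∪ W)) (v := v) ?_ hU ?_ hsrc
        · intro x hx
          simp only [Finset.coe_union, Set.mem_union, Finset.mem_coe] at hx
          rcases hx with hx | hx
          · exact Or.inr (by simp [hx])
          · by_cases hxv : x = v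
            · exact Or.inl hxv
            · exact Or.inr (by simp [Finset.mem_erase, hxv, hx])
        · intro u hu
          rcases Finset.mem_union.1 (hp u hu) with h | h
          · exact Or.inl (by simpa using h)
          · refine Or.inr ?_
            have huv : u ≠ v := by
              intro h'
              have := G.edge_lvl u v hu
              rw [h'] at this
              omega
            simp [Finset.mem_erase, huv, h]
      exact le_trans (pot_le_of_hides G _ _ _ hhide) hmU

/-- Let `G` be a layered DAG possessing the Limited
Hiding-Cardinality property, and let `P = (P_0 = (∅,∅), P_1, ..., P_τ)` be any
black-white pebbling on `G` starting from the empty configuration. Then for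
every `t ∈ {1,...,τ}`, `pot(P_t) ≤ 2 · max_{s ≤ t} cost(P_s)`, where
`cost(B,W) = |B ∪ W|`. -/
theorem potential_le_twice_max_cost {V : Type} [DecidableEq V] (G : LGraph V)
    (hLHC : ∀ B W : Finset V, Disjoint B W →
      ∃ U : Finset V, HidesSet G.pred (↑(U ∪ W)) (↑B) ∧
        pot G B W = klMeasure G U ∧ (U = B ∨ U.card < B.card + W.card))
    (P : BWPlay G.pred) :
    ∀ t : ℕ, 1 ≤ t → t ≤ P.len →
      pot G (P.cfg t).1 (P.cfg t).2 ≤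
        2 * ((Finset.range (t + 1)).sup fun s => ((P.cfg s).1 ∪ (P.cfg s).2).card) := by
  have hdisj : ∀ t, t ≤ P.len → Disjoint (P.cfg t).1 (P.cfg t).2 := by
    intro t
    induction t with
    | zero => intro _; simp [P.init]
    | succ t ih =>
      intro h
      have hlt : t < P.len := by omega
      exact bwmove_disjoint (P.steps t hlt) (ih (by omega))
  suffices h : ∀ t, t ≤ P.len → pot G (P.cfg t).1 (P.cfg t).2 ≤
      2 * ((Finset.range (t + 1)).sup fun s => ((P.cfg s).1 ∪ (P.cfg s).2).card) by
    intro t _ ht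
    exact h t ht
  intro t
  induction t with
  | zero =>
    intro _
    have hhide : HidesSet G.pred (↑((∅ : Finset V) ∪ (∅ : Finset V))) (↑(∅ : Finset V)) := by
      intro w hw
      simp at hw
    have h0 : pot G (∅ : Finset V) ∅ ≤ 0 := by
      simpa [klMeasure_empty] using pot_le_of_hides G ∅ ∅ ∅ hhide
    simp only [P.init]
    exact le_trans h0 (Nat.zero_le _)
  | succ t ih =>
    intro hlen
    have hlt : t < P.len := by omega
    have ihp := ih (by omega)
    have hcc : ((Finset.range (t + 1)).sup fun s => ((P.cfg s).1 ∪ (P.cfg s).2).card) ≤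
        ((Finset.range (t + 1 + 1)).sup fun s => ((P.cfg s).1 ∪ (P.cfg s).2).card) :=
      Finset.sup_mono (Finset.range_subset_range.2 (by omega))
    refine step_bound G hLHC (hdisj t (by omega)) (P.steps t hlt) ?_ ?_ ?_
    · exact le_trans ihp (by omega)
    · exact Finset.le_sup (f := fun s => ((P.cfg s).1 ∪ (P.cfg s).2).card)
        (Finset.mem_range.2 (Nat.lt_succ_of_lt (Nat.lt_succ_self t)))
    · exact Finset.le_sup (f := fun s => ((P.cfg s).1 ∪ (P.cfg s).2).card)
        (Finset.mem_range.2 (Nat.lt_succ_self (t + 1)))
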